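/- Let G be a graph with a fixed orientation of its edges, let f : V(G) → L be continuous, and let W₁, W₂ be walks in G. If W₁ and W₂ are (f,k)-almost homotopic, then |∫_{W₁} df − ∫_{W₂} df| ≤ k. In particular, if W₁ and W₂ are f-homotopic (i.e., (f,0)-almost homotopic), then ∫_{W₁} df = ∫_{W₂} df. -/
import Mathlib


/-- A graph together with a fixed orientation of its edges: each edge `e` has a
tail `e⁻` and a head `e⁺`. -/
structure OGraph : Type 1 where
  V : Type
  E : Type
  tail : E → V
  head : E → V

/-- The set of labels `L = {−1, 0, 1, ⋆}`. -/
inductive L : Type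
  | neg | zero | pos | star
deriving DecidableEq

/-- The integer value of a label (with junk value `0` at `⋆`). -/
def L.toInt : L → ℤ
  | .neg => -1
  | .zero => 0
  | .pos => 1
  | .star => 0

/-- Two vertices are adjacent if some edge has them as its two endpoints. -/
def OGraph.Adj (G : OGraph) (u v : G.V) : Prop :=
  ∃ e : G.E, (G.tail e = u ∧ G.head e = v) ∨ (G.tail e = v ∧ G.head e = u)

/-- `f` is continuous on `S`: no edge of `G` between vertices of `S` joins the
values `−1` and `1`. -/
def OContinuousOn (G : OGraph) (f : G.V → L) (S : Set G.V) : Prop :=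
  ∀ u v : G.V, u ∈ S → v ∈ S → G.Adj u v → ¬(f u = L.neg ∧ f v = L.pos)

/-- `f` is holomorphic on `S`: it is continuous on `S` and moreover no edge of `G`
between vertices of `S` joins the values `0` and `⋆`. -/
def OHolomorphicOn (G : OGraph) (f : G.V → L) (S : Set G.V) : Prop :=
  OContinuousOn G f S ∧
  ∀ u v : G.V, u ∈ S → v ∈ S → G.Adj u v → ¬(f u = L.zero ∧ f v = L.star)

/-- `f` is entire on `S`: it is continuous on `S` and takes no value `⋆` on `S`. -/
def OEntireOn (G : OGraph) (f : G.V → L) (S : Set G.V) : Prop :=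
  OContinuousOn G f S ∧ ∀ v ∈ S, f v ≠ L.star

/-- The derivative `df : E(G) → ℤ`: `df(e) = f(e⁺) − f(e⁻)` if neither endpoint has value
`⋆`, and `df(e) = 0` otherwise. -/
def dF (G : OGraph) (f : G.V → L) (e : G.E) : ℤ :=
  if f (G.tail e) = L.star ∨ f (G.head e) = L.star then 0
  else (f (G.head e)).toInt - (f (G.tail e)).toInt

/-- A walk in `G` from `u` to `v`, not necessarily respecting the orientation:
at each step some edge joins the current vertex to the next one. -/
inductive OWalk (G : OGraph) : G.V → G.V → Type
  | nil (v : G.V) : OWalk G v v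
  | cons {u w x : G.V} (e : G.E)
      (he : (G.tail e = u ∧ G.head e = w) ∨ (G.head e = u ∧ G.tail e = w))
      (W : OWalk G w x) : OWalk G u x

namespace OWalk

variable {G : OGraph}

/-- The length (number of edges) of a walk. -/
def length : ∀ {u v : G.V}, OWalk G u v → ℕ
  | _, _, nil _ => 0
  | _, _, cons _ _ W => W.length + 1

/-- The list of vertices `v₀, v₁, …, v_n` of a walk. -/
def verts : ∀ {u v : G.V}, OWalk G u v → List G.V
  | u, _, nil _ => [u]
  | u, _, cons _ _ W => u :: W.verts

open scoped Classical in
/-- `I_W = Σ_i ε_i`, where `ε_i(e_i) = +1` if `v_i = e_i⁺`, `ε_i(e_i) = −1` if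
`v_i = e_i⁻`, and `ε_i(e) = 0` for `e ≠ e_i`. -/
noncomputable def wI : ∀ {u v : G.V}, OWalk G u v → G.E → ℤ
  | _, _, nil _ => fun _ => 0
  | _, _, @cons _ _ w _ e _ W => fun e' =>
      (if e' = e then (if G.head e = w then 1 else -1) else 0) + W.wI e'

/-- Concatenation `W₁W₂` of walks. -/
def append : ∀ {u v x : G.V}, OWalk G u v → OWalk G v x → OWalk G u x
  | _, _, _, nil _, W2 => W2
  | _, _, _, cons e he W, W2 => cons e he (W.append W2)

/-- Extension of a walk by one edge at its end. -/
def concat : ∀ {u v w : G.V}, OWalk G u v → (e : G.E) →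
    ((G.tail e = v ∧ G.head e = w) ∨ (G.head e = v ∧ G.tail e = w)) → OWalk G u w
  | _, _, _, nil _, e, he => cons e he (nil _)
  | _, _, _, cons e' he' W, e, he => cons e' he' (W.concat e he)

/-- The reversal `W⁻¹` of a walk. -/
def reverse : ∀ {u v : G.V}, OWalk G u v → OWalk G v u
  | _, _, nil v => nil v
  | _, _, cons e he W => W.reverse.concat e (by tauto)

/-- `∫_W h = Σ_{e ∈ E(G)} I_W(e) · h(e)`. -/
noncomputable def intW [Fintype G.E] {u v : G.V} (W : OWalk G u v) (h : G.E → ℤ) : ℤ :=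
  ∑ e : G.E, W.wI e * h e

/-- A closed walk `W` is `(f,k)`-almost contractible: there are triangles `T₁, …, T_m`
with `I_W = Σ_i I_{T_i}` such that `T_{k+1}, …, T_m` are `f`-contractible (a triangle is
`f`-contractible when `f` is holomorphic on its vertices). -/
def AlmostContractible (f : G.V → L) (k : ℕ) {a : G.V} (W : OWalk G a a) : Prop :=
  ∃ (m : ℕ) (c : Fin m → G.V) (T : ∀ i : Fin m, OWalk G (c i) (c i)),
    (∀ i, (T i).length = 3) ∧
    (∀ i : Fin m, k ≤ i.val → OHolomorphicOn G f {x | x ∈ (T i).verts}) ∧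
    ∀ e : G.E, W.wI e = ∑ i : Fin m, (T i).wI e

/-- Walks `W₁` (from `u₁` to `v₁`) and `W₂` (from `u₂` to `v₂`) are `(f,k)`-almost
homotopic: there are walks `Q : u₁ → u₂` and `R : v₁ → v₂` such that the closed walk
`Q W₂ R⁻¹ W₁⁻¹` is `(f,k)`-almost contractible and `f` is constant with an integer value
(i.e. a value different from `⋆`) on each of `V(Q)` and `V(R)`. -/
def AlmostHomotopic (f : G.V → L) (k : ℕ) {u₁ v₁ u₂ v₂ : G.V}
    (W₁ : OWalk G u₁ v₁) (W₂ : OWalk G u₂ v₂) : Prop :=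
  ∃ (Q : OWalk G u₁ u₂) (R : OWalk G v₁ v₂),
    AlmostContractible f k ((Q.append W₂).append (R.reverse.append W₁.reverse)) ∧
    (∃ c : L, c ≠ L.star ∧ ∀ x ∈ Q.verts, f x = c) ∧
    (∃ c : L, c ≠ L.star ∧ ∀ x ∈ R.verts, f x = c)

end OWalk

instance : Fintype L :=
  ⟨⟨{L.neg, L.zero, L.pos, L.star}, by decide⟩, by intro x; cases x <;> decide⟩

namespace OWalkAux

open OWalk

def stepL (a b : L) : ℤ := if a = L.star ∨ b = L.star then 0 else b.toInt - a.toInt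

lemma stepL_self (a : L) : stepL a a = 0 := by cases a <;> rfl

lemma stepL_neg (a b : L) : stepL a b = - stepL b a := by
  revert a b; decide

def okL (a b : L) : Prop := ¬(a = L.neg ∧ b = L.pos)
def okH (a b : L) : Prop := ¬(a = L.zero ∧ b = L.star)

instance (a b : L) : Decidable (okL a b) := by unfold okL; infer_instance
instance (a b : L) : Decidable (okH a b) := by unfold okH; infer_instance

lemma tri_abs : ∀ a b c : L, okL a b → okL b a → okL b c → okL c b → okL c a → okL a c →
    |stepL a b + stepL b c + stepL c a| ≤ 1 := by decide

lemma tri_zero : ∀ a b c : L, okL a b → okL b a → okL b c → okL c b → okL c a → okL a c →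
    okH a b → okH b a → okH b c → okH c b → okH c a → okH a c →
    stepL a b + stepL b c + stepL c a = 0 := by decide

open scoped Classical

variable {G : OGraph}

lemma adj_of_he {u w : G.V} (e : G.E)
    (he : (G.tail e = u ∧ G.head e = w) ∨ (G.head e = u ∧ G.tail e = w)) : G.Adj u w := by
  rcases he with ⟨h1, h2⟩ | ⟨h1, h2⟩
  · exact ⟨e, Or.inl ⟨h1, h2⟩⟩
  · exact ⟨e, Or.inr ⟨h2, h1⟩⟩

lemma adj_symm {u v : G.V} (h : G.Adj u v) : G.Adj v u := by
  obtain ⟨e, h⟩ := h; exact ⟨e, h.symm⟩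

lemma intW_nil [Fintype G.E] (v : G.V) (h : G.E → ℤ) : (nil (G := G) v).intW h = 0 := by
  simp [intW, wI]

lemma intW_cons [Fintype G.E] {u w x : G.V} (e : G.E)
    (he : (G.tail e = u ∧ G.head e = w) ∨ (G.head e = u ∧ G.tail e = w))
    (W : OWalk G w x) (h : G.E → ℤ) :
    (cons e he W).intW h = (if G.head e = w then (1:ℤ) else -1) * h e + W.intW h := by
  classical
  simp only [intW, wI, add_mul, Finset.sum_add_distrib, ite_mul, zero_mul]
  congr 1
  simp

lemma start_mem_verts {u v : G.V} (W : OWalk G u v) : u ∈ W.verts := by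
  cases W <;> simp [verts]

lemma intW_cons_dF [Fintype G.E] (f : G.V → L) {u w x : G.V} (e : G.E)
    (he : (G.tail e = u ∧ G.head e = w) ∨ (G.head e = u ∧ G.tail e = w))
    (W : OWalk G w x) :
    (cons e he W).intW (dF G f) = stepL (f u) (f w) + W.intW (dF G f) := by
  rw [intW_cons]
  congr 1
  rcases he with ⟨ht, hh⟩ | ⟨hh, ht⟩
  · simp [hh, dF, stepL, ht]
  · by_cases hw : G.head e = w
    · have : u = w := by rw [← hh, hw]
      subst this
      simp [dF, stepL, ht, hh, stepL_self]
    · rw [stepL_neg (f u) (f w), if_neg hw, neg_one_mul, neg_inj]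
      unfold dF stepL
      rw [ht, hh]

lemma intW_append [Fintype G.E] (f : G.V → L) {u v x : G.V}
    (W1 : OWalk G u v) (W2 : OWalk G v x) :
    (W1.append W2).intW (dF G f) = W1.intW (dF G f) + W2.intW (dF G f) := by
  induction W1 with
  | nil v => simp [append, intW_nil]
  | cons e he W ih => simp [append, intW_cons_dF, ih]; ring

lemma intW_concat [Fintype G.E] (f : G.V → L) {u v w : G.V}
    (W : OWalk G u v) (e : G.E)
    (he : (G.tail e = v ∧ G.head e = w) ∨ (G.head e = v ∧ G.tail e = w)) :
    (W.concat e he).intW (dF G f) = W.intW (dF G f) + stepL (f v) (f w) := by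
  induction W with
  | nil v => simp [concat, intW_cons_dF, intW_nil]
  | cons e' he' W ih => simp [concat, intW_cons_dF, ih]; ring

lemma intW_reverse [Fintype G.E] (f : G.V → L) {u v : G.V} (W : OWalk G u v) :
    W.reverse.intW (dF G f) = - W.intW (dF G f) := by
  induction W with
  | nil v => simp [reverse, intW_nil]
  | cons e he W ih =>
    simp only [reverse, intW_concat, intW_cons_dF, ih]
    rw [stepL_neg]
    ring

lemma intW_const [Fintype G.E] (f : G.V → L) {u v : G.V} (W : OWalk G u v)
    (c : L) (h : ∀ x ∈ W.verts, f x = c) : W.intW (dF G f) = 0 := by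
  induction W with
  | nil v => simp [intW_nil]
  | @cons u w x e he W ih =>
    rw [intW_cons_dF]
    have h1 : f u = c := h u (by simp [verts])
    have h2 : f w = c := h w (by simp only [verts, List.mem_cons]; exact Or.inr (start_mem_verts W))
    rw [h1, h2, stepL_self, zero_add]
    exact ih fun x hx => h x (by simp [verts, hx])

lemma tri_struct [Fintype G.E] (f : G.V → L) {a : G.V} (T : OWalk G a a)
    (h3 : T.length = 3) :
    ∃ b c : G.V, G.Adj a b ∧ G.Adj b c ∧ G.Adj c a ∧ T.verts = [a, b, c, a] ∧
      T.intW (dF G f) = stepL (f a) (f b) + stepL (f b) (f c) + stepL (f c) (f a) := by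
  cases T with
  | nil => simp [length] at h3
  | cons e1 he1 W1 =>
    rename_i w1
    cases W1 with
    | nil => simp [length] at h3
    | cons e2 he2 W2 =>
      rename_i w2
      cases W2 with
      | nil => simp [length] at h3
      | cons e3 he3 W3 =>
        cases W3 with
        | cons e4 he4 W4 => simp [length] at h3
        | nil =>
          refine ⟨w1, w2, adj_of_he e1 he1, adj_of_he e2 he2, adj_of_he e3 he3, by simp [verts], ?_⟩
          rw [intW_cons_dF, intW_cons_dF, intW_cons_dF, intW_nil]
          ring

lemma tri_abs_le [Fintype G.E] (f : G.V → L) (hcont : OContinuousOn G f Set.univ)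
    {a : G.V} (T : OWalk G a a) (h3 : T.length = 3) : |T.intW (dF G f)| ≤ 1 := by
  obtain ⟨b, c, hab, hbc, hca, -, heq⟩ := tri_struct f T h3
  rw [heq]
  exact tri_abs _ _ _
    (fun h => hcont a b trivial trivial hab h)
    (fun h => hcont b a trivial trivial (adj_symm hab) h)
    (fun h => hcont b c trivial trivial hbc h)
    (fun h => hcont c b trivial trivial (adj_symm hbc) h)
    (fun h => hcont c a trivial trivial hca h)
    (fun h => hcont a c trivial trivial (adj_symm hca) h)

lemma tri_intW_zero [Fintype G.E] (f : G.V → L) {a : G.V} (T : OWalk G a a)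
    (h3 : T.length = 3) (hholo : OHolomorphicOn G f {x | x ∈ T.verts}) :
    T.intW (dF G f) = 0 := by
  obtain ⟨b, c, hab, hbc, hca, hv, heq⟩ := tri_struct f T h3
  obtain ⟨hc, hh⟩ := hholo
  rw [hv] at hc hh
  have ma : a ∈ {x | x ∈ [a, b, c, a]} := by simp
  have mb : b ∈ {x | x ∈ [a, b, c, a]} := by simp
  have mc : c ∈ {x | x ∈ [a, b, c, a]} := by simp
  rw [heq]
  exact tri_zero _ _ _
    (fun h => hc a b ma mb hab h) (fun h => hc b a mb ma (adj_symm hab) h)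
    (fun h => hc b c mb mc hbc h) (fun h => hc c b mc mb (adj_symm hbc) h)
    (fun h => hc c a mc ma hca h) (fun h => hc a c ma mc (adj_symm hca) h)
    (fun h => hh a b ma mb hab h) (fun h => hh b a mb ma (adj_symm hab) h)
    (fun h => hh b c mb mc hbc h) (fun h => hh c b mc mb (adj_symm hbc) h)
    (fun h => hh c a mc ma hca h) (fun h => hh a c ma mc (adj_symm hca) h)

lemma abs_intW_le [Fintype G.E] (f : G.V → L) (hcont : OContinuousOn G f Set.univ)
    (k : ℕ) {a : G.V} (W : OWalk G a a) (h : AlmostContractible f k W) :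
    |W.intW (dF G f)| ≤ (k : ℤ) := by
  classical
  obtain ⟨m, c, T, hlen, hholo, hsum⟩ := h
  have h1 : W.intW (dF G f) = ∑ i : Fin m, (T i).intW (dF G f) := by
    unfold OWalk.intW
    simp_rw [hsum, Finset.sum_mul]
    rw [Finset.sum_comm]
  rw [h1]
  calc |∑ i : Fin m, (T i).intW (dF G f)| ≤ ∑ i : Fin m, |(T i).intW (dF G f)| :=
        Finset.abs_sum_le_sum_abs _ _
    _ ≤ ∑ i : Fin m, (if i.val < k then (1:ℤ) else 0) := by
        refine Finset.sum_le_sum fun i _ => ?_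
        by_cases hik : i.val < k
        · simpa [hik] using tri_abs_le f hcont (T i) (hlen i)
        · simp only [hik, if_false]
          rw [tri_intW_zero f (T i) (hlen i) (hholo i (by omega))]
          simp
    _ ≤ (k : ℤ) := by
        rw [Finset.sum_ite, Finset.sum_const, Finset.sum_const, smul_zero, add_zero]
        have hcard : (Finset.univ.filter fun i : Fin m => i.val < k).card ≤ k := by
          have := Finset.card_le_card_of_injOn (f := Fin.val)
            (s := Finset.univ.filter fun i : Fin m => i.val < k) (t := Finset.range k)
            (by intro i hi; simp at hi ⊢; omega)
            (fun x _ y _ h => Fin.val_injective h)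
          simpa using this
        have h2 : ((Finset.univ.filter fun i : Fin m => i.val < k).card : ℤ) ≤ (k : ℤ) := by
          exact_mod_cast hcard
        simpa [nsmul_eq_mul] using h2

end OWalkAux


/-- If `f` is continuous and the walks `W₁`, `W₂` are `(f,k)`-almost homotopic, then
`|∫_{W₁} df − ∫_{W₂} df| ≤ k`; in particular `(f,0)`-almost homotopic (that is,
`f`-homotopic) walks satisfy `∫_{W₁} df = ∫_{W₂} df`. -/
theorem stmt_7 (G : OGraph) [Fintype G.E] (f : G.V → L)
    (hcont : OContinuousOn G f Set.univ) (k : ℕ)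
    {u₁ v₁ u₂ v₂ : G.V} (W₁ : OWalk G u₁ v₁) (W₂ : OWalk G u₂ v₂)
    (hhom : OWalk.AlmostHomotopic f k W₁ W₂) :
    |W₁.intW (dF G f) - W₂.intW (dF G f)| ≤ (k : ℤ) ∧
    (k = 0 → W₁.intW (dF G f) = W₂.intW (dF G f)) := by
  classical
  obtain ⟨Q, R, hc, ⟨cq, hcq, hQ⟩, ⟨cr, hcr, hR⟩⟩ := hhom
  have h1 := OWalkAux.abs_intW_le f hcont k _ hc
  have h2 : ((Q.append W₂).append (R.reverse.append W₁.reverse)).intW (dF G f)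
      = W₂.intW (dF G f) - W₁.intW (dF G f) := by
    rw [OWalkAux.intW_append, OWalkAux.intW_append, OWalkAux.intW_append,
      OWalkAux.intW_reverse, OWalkAux.intW_reverse,
      OWalkAux.intW_const f Q cq hQ, OWalkAux.intW_const f R cr hR]
    ring
  rw [h2] at h1
  constructor
  · rw [abs_sub_comm]; exact h1
  · intro hk
    subst hk
    simp only [Nat.cast_zero] at h1
    have := abs_nonpos_iff.mp h1
    linarith [sub_eq_zero.mp this]
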